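/- arXiv:2010.08274 — 4 statements merged into one kernel-verified Lean document; each statement's English description precedes it below -/
import Mathlib

section
/- Let V be a finite type with n = card V elements and let r : V → V → Prop be an irreflexive relation (a finite directed graph with no self-loops). Fix vertices v and u, and suppose u is reachable from v along r (i.e., Relation.ReflTransGen r v u holds). Let d be the cardinality of the out-neighborhood {w : V | r v w} of v. Then there exists a list l : List V such that List.Chain r v l holds, the last element of the list v :: l is u, and the length of l (the number of edges traversed) is at most n - d. -/
lemma dup_decomp {α : Type*} {a : α} {m : List α} (h : List.Duplicate a m) :
    ∃ s t p : List α, m = s ++ a :: t ++ a :: p := by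
  induction h with
  | cons_mem h =>
      obtain ⟨t, p, rfl⟩ := List.append_of_mem h
      exact ⟨[], t, p, rfl⟩
  | @cons_duplicate y _ _ ih =>
      obtain ⟨s, t, p, rfl⟩ := ih
      exact ⟨y :: s, t, p, rfl⟩

lemma last_of_last? {α : Type*} (x : α) (l : List α) {u : α}
    (h : (x :: l).getLast? = some u) : (x :: l).getLast (List.cons_ne_nil x l) = u := by
  rw [List.getLast?_eq_getLast (List.cons_ne_nil x l)] at h
  exact Option.some.inj h

theorem reachable_walk_length_le_card_sub_outdegree
    {V : Type*} [Fintype V] (r : V → V → Prop) (hirr : Irreflexive r)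
    (n : ℕ) (hn : n = Fintype.card V)
    (v u : V) (hreach : Relation.ReflTransGen r v u)
    (d : ℕ) (hd : d = Nat.card {w : V | r v w}) :
    ∃ l : List V, List.Chain r v l ∧
      (v :: l).getLast (List.cons_ne_nil v l) = u ∧ l.length ≤ n - d := by
  classical
  have hex : ∃ k : ℕ, ∃ l : List V, List.Chain r v l ∧
      (v :: l).getLast (List.cons_ne_nil v l) = u ∧ l.length = k := by
    obtain ⟨l, h1, h2⟩ := List.exists_isChain_cons_of_relationReflTransGen hreach
    exact ⟨l.length, l, h1, h2, rfl⟩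
  obtain ⟨l, hc, hlast, hklen⟩ := Nat.find_spec hex
  have hmin : ∀ l' : List V, List.Chain r v l' →
      (v :: l').getLast (List.cons_ne_nil v l') = u → l.length ≤ l'.length := by
    intro l' h1 h2
    rw [hklen]
    exact Nat.find_le ⟨l', h1, h2, rfl⟩
  have hlast? : (v :: l).getLast? = some u := by
    rw [List.getLast?_eq_getLast (List.cons_ne_nil v l), hlast]
  refine ⟨l, hc, hlast, ?_⟩
  -- claim 1: no duplicates in v :: l
  have hnodup : (v :: l).Nodup := by
    by_contra hnd
    obtain ⟨a, hdup⟩ := List.exists_duplicate_iff_not_nodup.2 hnd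
    obtain ⟨s, t, p, hm⟩ := dup_decomp hdup
    match s, hm with
    | [], hm =>
        simp only [List.nil_append, List.cons_append] at hm
        obtain ⟨rfl, rfl⟩ := List.cons_eq_cons.mp hm
        have hcp : List.Chain r v p := (List.isChain_cons_split.1 hc).2
        have hlp : (v :: p).getLast (List.cons_ne_nil v p) = u := by
          apply last_of_last?
          rw [← hlast?]
          have e : (v :: (t ++ v :: p)) = (v :: t) ++ v :: p := by simp
          rw [e, List.getLast?_append_cons]
        have := hmin p hcp hlp
        simp only [List.length_cons, List.length_append] at this
        omega
    | b :: s', hm =>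
        simp only [List.cons_append, List.append_assoc] at hm
        obtain ⟨rfl, rfl⟩ := List.cons_eq_cons.mp hm
        have h1 : List.Chain r v (s' ++ [a]) ∧ List.Chain r a (t ++ a :: p) :=
          List.isChain_cons_split.1 hc
        have h2 := List.isChain_cons_split.1 h1.2
        have hc' : List.Chain r v (s' ++ a :: p) := List.isChain_cons_split.2 ⟨h1.1, h2.2⟩
        have hl' : (v :: (s' ++ a :: p)).getLast (List.cons_ne_nil _ _) = u := by
          apply last_of_last?
          rw [← hlast?]
          have e1 : (v :: (s' ++ a :: p)) = (v :: s') ++ a :: p := by simp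
          have e2 : (v :: (s' ++ a :: (t ++ a :: p))) = ((v :: s') ++ (a :: t)) ++ a :: p := by
            simp
          rw [e1, e2, List.getLast?_append_cons, List.getLast?_append_cons]
        have := hmin _ hc' hl'
        simp only [List.length_cons, List.length_append] at this
        omega
  -- claim 2: no shortcut beyond the first vertex
  match l, hc, hlast, hlast?, hmin, hnodup with
  | [], _, _, _, _, _ => simp
  | x :: rest, hc, hlast, hlast?, hmin, hnodup =>
    have hshort : ∀ w ∈ rest, ¬ r v w := by
      intro w hw hrvw
      obtain ⟨s, t, rfl⟩ := List.append_of_mem hw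
      have hct : List.Chain r w t := by
        have h : List.Chain r v ((x :: s) ++ w :: t) := hc
        exact (List.isChain_cons_split.1 h).2
      have hc' : List.Chain r v (w :: t) := List.chain_cons.2 ⟨hrvw, hct⟩
      have hl' : (v :: (w :: t)).getLast (List.cons_ne_nil _ _) = u := by
        apply last_of_last?
        rw [← hlast?]
        have e1 : (v :: w :: t) = [v] ++ w :: t := by simp
        have e2 : (v :: x :: (s ++ w :: t)) = (v :: x :: s) ++ w :: t := by simp
        rw [e1, e2, List.getLast?_append_cons, List.getLast?_append_cons]
      have := hmin _ hc' hl'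
      simp only [List.length_cons, List.length_append] at this
      omega
    -- counting
    set N : Finset V := Finset.univ.filter (r v) with hN
    have hdN : N.card = d := by
      rw [hd, Nat.card_eq_fintype_card, Fintype.card_subtype]
      congr 1
    set S : Finset V := (v :: x :: rest).toFinset with hS
    have hScard : S.card = rest.length + 2 := by
      rw [hS, List.toFinset_card_of_nodup hnodup]
      simp
    have hinter : S ∩ N ⊆ {x} := by
      intro w hw
      simp only [Finset.mem_inter, hS, hN, List.mem_toFinset, Finset.mem_filter,
        Finset.mem_singleton, List.mem_cons] at hw ⊢
      obtain ⟨hw1 | hw1 | hw1, _, hw2⟩ := hw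
      · exact absurd (hw1 ▸ hw2) (hirr v)
      · exact hw1
      · exact absurd hw2 (hshort w hw1)
    have h1 : (S ∩ N).card ≤ 1 := le_trans (Finset.card_le_card hinter) (by simp)
    have h2 : (S ∪ N).card ≤ n := hn ▸ Finset.card_le_univ _
    have h3 := Finset.card_union_add_card_inter S N
    simp only [List.length_cons]
    omega
end

section
/- Let V be a finite type with n = card V elements and let r : V → V → Prop be an irreflexive relation (a finite directed graph with no self-loops). Let m be the minimum over all vertices w : V of the cardinality of the out-neighborhood {x : V | r w x}. Then for any two vertices v and u such that u is reachable from v along r (i.e., Relation.ReflTransGen r v u holds), there exists a list l : List V such that List.Chain r v l holds, the last element of the list v :: l is u, and the length of l is at most n - m. -/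
private lemma dup_decomp_s2 {α : Type*} {x : α} :
    ∀ {L : List α}, [x, x].Sublist L → ∃ t₁ t₂ t₃, L = t₁ ++ x :: t₂ ++ x :: t₃ := by
  intro L h
  induction L with
  | nil => simp at h
  | cons a L ih =>
    cases h with
    | cons _ h =>
      obtain ⟨t₁, t₂, t₃, rfl⟩ := ih h
      exact ⟨a :: t₁, t₂, t₃, rfl⟩
    | cons_cons _ h =>
      obtain ⟨s, t, rfl⟩ := List.append_of_mem (List.singleton_sublist.1 h)
      exact ⟨[], s, t, rfl⟩

theorem reachable_walk_length_le_card_sub_minOutdegree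
    {V : Type*} [Fintype V] (r : V → V → Prop) (hirr : Irreflexive r)
    (n : ℕ) (hn : n = Fintype.card V)
    (m : ℕ) (hm : m = ⨅ w : V, Nat.card {x : V | r w x})
    (v u : V) (hreach : Relation.ReflTransGen r v u) :
    ∃ l : List V, List.Chain r v l ∧
      (v :: l).getLast (List.cons_ne_nil v l) = u ∧ l.length ≤ n - m := by
  classical
  obtain ⟨l0, hc0, hl0⟩ := List.exists_isChain_cons_of_relationReflTransGen hreach
  have hQ : ∃ k, ∃ l : List V, l.length = k ∧ List.Chain r v l ∧
      (v :: l).getLast? = some u :=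
    ⟨l0.length, l0, rfl, hc0, by rw [List.getLast?_eq_getLast (List.cons_ne_nil v l0), hl0]⟩
  obtain ⟨l, hlen, hc, hlast⟩ := Nat.find_spec hQ
  have hmin : ∀ l' : List V, List.Chain r v l' → (v :: l').getLast? = some u →
      l.length ≤ l'.length := by
    intro l' h1 h2
    rw [hlen]
    exact Nat.find_min' hQ ⟨l', rfl, h1, h2⟩
  refine ⟨l, hc, ?_, ?_⟩
  · rw [List.getLast?_eq_getLast (List.cons_ne_nil v l)] at hlast
    exact Option.some_injective _ hlast
  -- Nodup of v :: l
  have hnodup : (v :: l).Nodup := by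
    by_contra hnd
    obtain ⟨x, hx⟩ := List.exists_duplicate_iff_not_nodup.2 hnd
    obtain ⟨t₁, t₂, t₃, ht⟩ := dup_decomp_s2 (List.duplicate_iff_sublist.1 hx)
    cases t₁ with
    | nil =>
      simp only [List.nil_append, List.cons.injEq] at ht
      obtain ⟨rfl, rfl⟩ := ht
      have h1 : List.Chain r v t₃ := (List.isChain_cons_split.1 hc).2
      have h2 : (v :: t₃).getLast? = some u := by
        rw [← hlast, ← List.getLast?_append_cons (v :: t₂) v t₃]; rfl
      have := hmin t₃ h1 h2
      simp only [List.append_eq, List.length_append, List.length_cons] at this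
      omega
    | cons a s =>
      simp only [List.cons_append, List.cons.injEq] at ht
      obtain ⟨rfl, rfl⟩ := ht
      have h1 : List.Chain r v (s ++ [x]) ∧ List.Chain r x (t₂ ++ x :: t₃) :=
        (List.isChain_cons_split (l₁ := s) (c := x) (l₂ := t₂ ++ x :: t₃)).1 (by simpa [List.Chain] using hc)
      have h2 : List.Chain r x t₃ := (List.isChain_cons_split.1 h1.2).2
      have h3 : List.Chain r v (s ++ x :: t₃) := List.isChain_cons_split.2 ⟨h1.1, h2⟩
      have h4 : (v :: (s ++ x :: t₃)).getLast? = some u := by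
        rw [← hlast]
        rw [show v :: (s ++ x :: t₃) = (v :: s) ++ x :: t₃ from rfl,
          List.getLast?_append_cons,
          show v :: (s ++ x :: t₂ ++ x :: t₃) = (v :: (s ++ x :: t₂)) ++ x :: t₃ by simp,
          List.getLast?_append_cons]
      have := hmin _ h3 h4
      simp only [List.length_append, List.length_cons] at this
      omega
  -- if r v y and y ∈ l then y is the head of l
  have hhead : ∀ t₁ y t₂, l = t₁ ++ y :: t₂ → r v y → t₁ = [] := by
    intro t₁ y t₂ ht hr
    have h2 : List.Chain r y t₂ := by
      rw [ht] at hc; exact (List.isChain_cons_split.1 hc).2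
    have h3 : List.Chain r v (y :: t₂) := List.Chain.cons hr h2
    have h4 : (v :: y :: t₂).getLast? = some u := by
      rw [← hlast, ht, show v :: (t₁ ++ y :: t₂) = (v :: t₁) ++ y :: t₂ from rfl,
        List.getLast?_append_cons,
        show v :: y :: t₂ = [v] ++ y :: t₂ from rfl, List.getLast?_append_cons]
    have := hmin _ h3 h4
    rw [ht] at this
    simp only [List.length_append, List.length_cons] at this
    have : t₁.length = 0 := by omega
    exact List.length_eq_zero_iff.1 this
  -- counting
  have hne : Nonempty V := ⟨v⟩
  set P : Finset V := (v :: l).toFinset with hP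
  set N : Finset V := Finset.univ.filter (fun x => r v x) with hN
  have hcardP : P.card = l.length + 1 := by
    rw [hP, List.toFinset_card_of_nodup hnodup]; simp
  have hcardN : m ≤ N.card := by
    rw [hm]
    refine le_trans (ciInf_le (OrderBot.bddBelow _) v) ?_
    rw [Nat.card_eq_fintype_card]
    rw [hN]
    rw [Fintype.card_subtype]
    simp [Set.mem_setOf_eq]
  have hinter : (P ∩ N).card ≤ 1 := by
    rcases l with _ | ⟨x₁, rest⟩
    · -- l = [] : P ∩ N = ∅ since r v v is false
      refine le_trans (Finset.card_le_card (show P ∩ N ⊆ {v} from ?_)) (Finset.card_singleton v).le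
      intro y hy
      simp [hP, hN] at hy
      exact Finset.mem_singleton.2 hy.1
    · refine le_trans (Finset.card_le_card (show P ∩ N ⊆ {x₁} from ?_))
        (Finset.card_singleton x₁).le
      intro y hy
      simp only [hP, hN, Finset.mem_inter, List.mem_toFinset, Finset.mem_filter,
        Finset.mem_singleton] at hy ⊢
      obtain ⟨hy1, _, hy2⟩ := hy
      rcases List.mem_cons.1 hy1 with rfl | hy1
      · exact absurd hy2 (hirr y)
      · obtain ⟨s, t, hst⟩ := List.append_of_mem hy1
        have := hhead s y t hst hy2
        subst this
        simp at hst
        exact hst.1.symm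
  have hunion : (P ∪ N).card ≤ n := by
    rw [hn]; exact Finset.card_le_univ _
  have := Finset.card_union_add_card_inter P N
  omega
end

section
/- Let G be a connected simple graph on a finite vertex type V with n = card V vertices. Then for every pair of vertices v and u, the graph distance satisfies G.dist v u ≤ n - G.degree v. -/
theorem dist_le_card_sub_degree
    {V : Type*} [Fintype V] (G : SimpleGraph V) [DecidableRel G.Adj]
    (hG : G.Connected) (n : ℕ) (hn : n = Fintype.card V) (v u : V) :
    G.dist v u ≤ n - G.degree v := by
  subst hn
  classical
  rcases eq_or_ne (G.dist v u) 0 with h0 | h0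
  · simp [h0]
  obtain ⟨p, hp⟩ := SimpleGraph.exists_walk_of_dist_ne_zero h0
  set q := p.bypass with hq
  have hqpath : q.IsPath := SimpleGraph.Walk.bypass_isPath p
  have hqlen : q.length = G.dist v u := by
    have h1 : G.dist v u ≤ q.length := SimpleGraph.dist_le q
    have h2 : q.length ≤ p.length := SimpleGraph.Walk.length_bypass_le p
    omega
  -- every neighbor of v on q is the vertex at index 1
  have key : ∀ w, w ∈ q.support → G.Adj v w → w = q.getVert 1 := by
    intro w hw hadj
    have hdvw : G.dist v w = 1 := SimpleGraph.dist_eq_one_iff_adj.mpr hadj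
    have hspec := q.take_spec hw
    have hlen : (q.takeUntil w hw).length + (q.dropUntil w hw).length = q.length := by
      rw [← SimpleGraph.Walk.length_append, hspec]
    have h1 : G.dist v w ≤ (q.takeUntil w hw).length := SimpleGraph.dist_le _
    have h2 : G.dist w u ≤ (q.dropUntil w hw).length := SimpleGraph.dist_le _
    have htri : G.dist v u ≤ G.dist v w + G.dist w u := hG.dist_triangle
    have htake1 : (q.takeUntil w hw).length = 1 := by omega
    have : q.getVert 1 = (q.dropUntil w hw).getVert 0 := by
      conv_lhs => rw [← hspec]
      rw [SimpleGraph.Walk.getVert_append]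
      simp [htake1]
    simpa [SimpleGraph.Walk.getVert_zero] using this.symm
  set S := q.support.toFinset with hS
  set N := G.neighborFinset v with hN
  have hScard : S.card = q.length + 1 := by
    rw [hS, List.toFinset_card_of_nodup hqpath.support_nodup,
      SimpleGraph.Walk.length_support]
  have hNcard : N.card = G.degree v := G.card_neighborFinset_eq_degree v
  have hinter : (S ∩ N) ⊆ {q.getVert 1} := by
    intro w hwmem
    rw [Finset.mem_inter] at hwmem
    obtain ⟨hwS, hwN⟩ := hwmem
    rw [hS, List.mem_toFinset] at hwS
    rw [hN, SimpleGraph.mem_neighborFinset] at hwN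
    simp [key w hwS hwN]
  have hintercard : (S ∩ N).card ≤ 1 := by
    simpa using Finset.card_le_card hinter
  have hunion : (S ∪ N).card ≤ Fintype.card V := Finset.card_le_univ _
  have := Finset.card_union_add_card_inter S N
  omega
end

section
/- Let G be a connected simple graph on a finite nonempty vertex type V with n = card V vertices. Then for every pair of vertices v and u, the graph distance satisfies G.dist v u ≤ n - G.minDegree, where G.minDegree is the minimum degree over all vertices of G. -/
open SimpleGraph Finset

private lemma neighbor_on_shortest_path
    {V : Type*} {G : SimpleGraph V} (hG : G.Connected) {v u x : V} (p : G.Walk v u)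
    (hp : p.length = G.dist v u) (hx : x ∈ p.support) (hadj : G.Adj v x) :
    x = p.getVert 1 := by
  classical
  have hxv : v ≠ x := hadj.ne
  set t := p.takeUntil x hx with ht
  set r := p.dropUntil x hx with hr
  have hspec : t.append r = p := p.take_spec hx
  have hlen : t.length + r.length = p.length := by
    rw [← hspec]; exact (Walk.length_append t r).symm
  have hdvx : G.dist v x = 1 := (G.dist_eq_one_iff_adj).mpr hadj
  have h1 : G.dist v x ≤ t.length := SimpleGraph.dist_le t
  have h2 : G.dist x u ≤ r.length := SimpleGraph.dist_le r
  have h3 : G.dist v u ≤ G.dist v x + G.dist x u := hG.dist_triangle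
  have ht1 : t.length = 1 := by omega
  have : p.getVert 1 = x := by
    rw [← hspec, Walk.getVert_append]
    simp [ht1, Walk.getVert_zero]
  exact this.symm

theorem dist_le_card_sub_minDegree
    {V : Type*} [Fintype V] [Nonempty V] (G : SimpleGraph V) [DecidableRel G.Adj]
    (hG : G.Connected) (n : ℕ) (hn : n = Fintype.card V) (v u : V) :
    G.dist v u ≤ n - G.minDegree := by
  classical
  obtain ⟨p, hpath, hplen⟩ := hG.exists_path_of_dist v u
  set d := G.dist v u with hd
  set S : Finset V := p.support.toFinset with hS
  have hScard : S.card = d + 1 := by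
    rw [hS, List.toFinset_card_of_nodup hpath.support_nodup,
      Walk.length_support, hplen]
  set N : Finset V := G.neighborFinset v with hN
  have hsub : N ∩ S ⊆ {p.getVert 1} := by
    intro x hx
    simp only [Finset.mem_inter, hN, hS, SimpleGraph.mem_neighborFinset,
      List.mem_toFinset] at hx
    simp [neighbor_on_shortest_path hG p hplen hx.2 hx.1]
  have hNS : N.card ≤ (N \ S).card + 1 := by
    have := Finset.card_sdiff_add_card_inter N S
    have h1 : (N ∩ S).card ≤ 1 := by
      calc (N ∩ S).card ≤ ({p.getVert 1} : Finset V).card := Finset.card_le_card hsub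
        _ = 1 := Finset.card_singleton _
    omega
  have hdeg : G.minDegree ≤ N.card := G.minDegree_le_degree v
  have hdisj : Disjoint S (N \ S) := Finset.disjoint_sdiff
  have hunion : (S ∪ (N \ S)).card ≤ n := by
    rw [hn]; exact Finset.card_le_univ _
  rw [Finset.card_union_of_disjoint hdisj] at hunion
  omega
end
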